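/- Let W ∈ ℝⁿ with σ₁(W) > 0 and σ₂(W) ≥ 0, and let U ∈ ℝⁿ be arbitrary. If σ₁(U) ≠ 0, then setting V = U − (σ₁(U)/σ₁(W))·W, one has σ₁(V) = 0 and hence σ₂(V,V) ≤ 0, which expands to the inequality: −σ₂(U,U) ≥ −2·σ₁(U)·σ₂(U,W)/σ₁(W) + σ₁(U)²·σ₂(W,W)/σ₁(W)². -/

import Mathlib

open Finset

/-- First elementary symmetric polynomial. -/
def sigma1 {n : ℕ} (κ : Fin n → ℝ) : ℝ := ∑ i, κ i

/-- Second elementary symmetric polynomial. -/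
def sigma2 {n : ℕ} (κ : Fin n → ℝ) : ℝ :=
  ∑ p ∈ Finset.univ.filter (fun p : Fin n × Fin n => p.1 < p.2), κ p.1 * κ p.2

/-- Third elementary symmetric polynomial. -/
def sigma3 {n : ℕ} (κ : Fin n → ℝ) : ℝ :=
  ∑ p ∈ Finset.univ.filter
      (fun p : Fin n × Fin n × Fin n => p.1 < p.2.1 ∧ p.2.1 < p.2.2),
    κ p.1 * κ p.2.1 * κ p.2.2

/-- Polarized form of `2 * sigma2` : `Q x y = ∑_{i ≠ j} x i * y j`. -/
def polarQ {n : ℕ} (x y : Fin n → ℝ) : ℝ :=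
  ∑ p ∈ Finset.univ.offDiag, x p.1 * y p.2

lemma polarQ_eq {n : ℕ} (x y : Fin n → ℝ) :
    polarQ x y = sigma1 x * sigma1 y - ∑ i, x i * y i := by
  classical
  have hsplit := Finset.sum_filter_add_sum_filter_not
    (Finset.univ ×ˢ Finset.univ) (fun p : Fin n × Fin n => p.1 = p.2)
    (fun p => x p.1 * y p.2)
  have hdiag : ∑ p ∈ (Finset.univ ×ˢ Finset.univ).filter
      (fun p : Fin n × Fin n => p.1 = p.2), x p.1 * y p.2 = ∑ i, x i * y i := by
    rw [Finset.sum_filter, Finset.univ_product_univ, Fintype.sum_prod_type]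
    simp
  have hfull : ∑ p ∈ (Finset.univ ×ˢ Finset.univ : Finset (Fin n × Fin n)),
      x p.1 * y p.2 = (∑ i, x i) * (∑ i, y i) := by
    rw [Finset.sum_mul_sum, Finset.sum_product]
  have hoff : (Finset.univ : Finset (Fin n)).offDiag
      = (Finset.univ ×ˢ Finset.univ).filter (fun p => ¬ p.1 = p.2) := by
    ext p; simp [Finset.mem_offDiag]
  rw [polarQ, hoff]
  simp only [sigma1]
  linarith [hsplit, hdiag, hfull]

/-- First inequality of Lemma 2.1: with `V = U - (σ₁(U)/σ₁(W)) W`,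
one has `σ₁(V) = 0`, hence `σ₂(V,V) ≤ 0`, which expands to the stated inequality. -/
theorem stmt2 {n : ℕ} (W U : Fin n → ℝ)
    (hW1 : 0 < sigma1 W) (hW2 : 0 ≤ sigma2 W) (hU : sigma1 U ≠ 0) :
    sigma1 (fun i => U i - (sigma1 U / sigma1 W) * W i) = 0 ∧
    polarQ (fun i => U i - (sigma1 U / sigma1 W) * W i)
      (fun i => U i - (sigma1 U / sigma1 W) * W i) ≤ 0 ∧
    -polarQ U U ≥ -2 * sigma1 U * polarQ U W / sigma1 W
      + (sigma1 U)^2 * polarQ W W / (sigma1 W)^2 := by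
  set t := sigma1 U / sigma1 W with ht
  set V : Fin n → ℝ := fun i => U i - t * W i with hV
  have hWne : sigma1 W ≠ 0 := ne_of_gt hW1
  have h1V : sigma1 V = sigma1 U - t * sigma1 W := by
    simp only [sigma1, hV, Finset.sum_sub_distrib, ← Finset.mul_sum]
  have h1 : sigma1 V = 0 := by
    rw [h1V, ht]; field_simp; ring
  have hsum : ∑ i, V i * V i
      = (∑ i, U i * U i) - 2 * t * (∑ i, U i * W i) + t ^ 2 * (∑ i, W i * W i) := by
    have hpt : ∀ i, V i * V i
        = U i * U i - 2 * t * (U i * W i) + t ^ 2 * (W i * W i) := by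
      intro i; simp only [hV]; ring
    simp only [hpt, Finset.sum_add_distrib, Finset.sum_sub_distrib, ← Finset.mul_sum]
  have h2 : polarQ V V ≤ 0 := by
    rw [polarQ_eq, h1]
    simp only [zero_mul, zero_sub, neg_nonpos]
    exact Finset.sum_nonneg fun i _ => mul_self_nonneg _
  have hexp : polarQ V V
      = polarQ U U - 2 * t * polarQ U W + t ^ 2 * polarQ W W := by
    rw [polarQ_eq, polarQ_eq, polarQ_eq, polarQ_eq, h1, hsum]
    have := h1V; rw [h1] at this
    nlinarith [this]
  refine ⟨h1, h2, ?_⟩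
  have h3 : polarQ U U - 2 * t * polarQ U W + t ^ 2 * polarQ W W ≤ 0 := by
    rw [← hexp]; exact h2
  have ht2 : t ^ 2 = (sigma1 U) ^ 2 / (sigma1 W) ^ 2 := by
    rw [ht, div_pow]
  have hta : -2 * sigma1 U * polarQ U W / sigma1 W = -2 * t * polarQ U W := by
    rw [ht]; field_simp
  have htb : (sigma1 U)^2 * polarQ W W / (sigma1 W)^2 = t ^ 2 * polarQ W W := by
    rw [ht2]; ring
  rw [hta, htb]
  linarith
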